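/- arXiv:2501.17651 — 3 statements merged into one kernel-verified Lean document; each statement's English description precedes it below -/
import Mathlib

section
/- Let (X,d,μ) be a metric measure space with a doubling measure, let 1 < p < ∞ and let w be a weight in X. Assume there is a constant C₁ such that ∫_X (M*f)^p w dμ ≤ C₁ ∫_X f^p w dμ for every nonnegative f ∈ L^∞(X) with bounded support, where M* is the noncentered Hardy–Littlewood maximal function. Then w belongs to the Muckenhoupt class A_p and [w]_{A_p} ≤ C₁. -/
open MeasureTheory Metric ENNReal

noncomputable section

/-- The standing assumptions on the metric measure space `(X, d, μ)`: `X` has at least two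
points, `μ` is a positive complete Borel measure which is positive and finite on all open
balls, and `μ` is doubling with doubling constant `c > 1`. -/
def GoodSpace (X : Type*) [MetricSpace X] [MeasurableSpace X] (μ : Measure X) (c : ℝ) : Prop :=
  Nontrivial X ∧ μ.IsComplete ∧
    (∀ (x : X) (r : ℝ), 0 < r → 0 < μ (ball x r) ∧ μ (ball x r) < ⊤) ∧
    1 < c ∧ ∀ (x : X) (r : ℝ), 0 < r → μ (ball x (2 * r)) ≤ ENNReal.ofReal c * μ (ball x r)

/-- `w` is a weight in `X`: measurable, positive `μ`-a.e., and integrable on all balls. -/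
def IsWeight {X : Type*} [MetricSpace X] [MeasurableSpace X] (μ : Measure X) (w : X → ℝ) :
    Prop :=
  Measurable w ∧ (∀ᵐ x ∂μ, 0 < w x) ∧
    ∀ (x : X) (r : ℝ), 0 < r → IntegrableOn w (ball x r) μ

/-- The weighted measure `w(E) = ∫_E w dμ` of a set `E`. -/
def wMeas {X : Type*} [MetricSpace X] [MeasurableSpace X] (μ : Measure X) (w : X → ℝ)
    (E : Set X) : ℝ≥0∞ :=
  ∫⁻ y in E, ENNReal.ofReal (w y) ∂μ

/-- The Muckenhoupt `A_p` condition with constant `C`: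
`(⨍_B w dμ) * (⨍_B w^(1/(1-p)) dμ)^(p-1) ≤ C` for every ball `B`. -/
def ApWith {X : Type*} [MetricSpace X] [MeasurableSpace X] (μ : Measure X) (w : X → ℝ)
    (p C : ℝ) : Prop :=
  ∀ (x : X) (r : ℝ), 0 < r →
    (wMeas μ w (ball x r) / μ (ball x r)) *
      ((∫⁻ y in ball x r, ENNReal.ofReal (w y) ^ (1 / (1 - p)) ∂μ) / μ (ball x r)) ^ (p - 1)
      ≤ ENNReal.ofReal C

/-- Membership in the Muckenhoupt class `A_p`. -/
def MemAp {X : Type*} [MetricSpace X] [MeasurableSpace X] (μ : Measure X) (w : X → ℝ)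
    (p : ℝ) : Prop :=
  ∃ C : ℝ, ApWith μ w p C

/-- The smallest constant in the `A_p` condition, denoted `[w]_{A_p}`. -/
def ApConst {X : Type*} [MetricSpace X] [MeasurableSpace X] (μ : Measure X) (w : X → ℝ)
    (p : ℝ) : ℝ :=
  sInf {C : ℝ | ApWith μ w p C}

/-- The noncentered maximal function of an `ℝ≥0∞`-valued function. -/
def MncE {X : Type*} [MetricSpace X] [MeasurableSpace X] (μ : Measure X) (g : X → ℝ≥0∞)
    (x : X) : ℝ≥0∞ :=
  ⨆ (z : X) (r : ℝ) (_ : x ∈ ball z r), (∫⁻ y in ball z r, g y ∂μ) / μ (ball z r)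

/-- The noncentered Hardy–Littlewood maximal function `M* f`. -/
def Mnc {X : Type*} [MetricSpace X] [MeasurableSpace X] (μ : Measure X) (f : X → ℝ)
    (x : X) : ℝ≥0∞ :=
  MncE μ (fun y => ENNReal.ofReal |f y|) x

/-- The weighted noncentered maximal function `M^{*,v} g` (for `ℝ≥0∞`-valued `g`). -/
def MncWE {X : Type*} [MetricSpace X] [MeasurableSpace X] (μ : Measure X) (v : X → ℝ)
    (g : X → ℝ≥0∞) (x : X) : ℝ≥0∞ :=
  ⨆ (z : X) (r : ℝ) (_ : x ∈ ball z r),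
    (∫⁻ y in ball z r, g y * ENNReal.ofReal (v y) ∂μ) / wMeas μ v (ball z r)

/-- `f` has bounded support: `{x : f x ≠ 0}` is contained in some ball. -/
def BoundedSupport {X : Type*} [MetricSpace X] (f : X → ℝ) : Prop :=
  ∃ (z : X) (r : ℝ), ∀ x, f x ≠ 0 → x ∈ ball z r

/-- Membership in the weighted space `L^p(w dμ)`. -/
def MemLpW {X : Type*} [MetricSpace X] [MeasurableSpace X] (μ : Measure X) (w : X → ℝ)
    (p : ℝ) (f : X → ℝ) : Prop :=
  Measurable f ∧ ∫⁻ x, ENNReal.ofReal |f x| ^ p * ENNReal.ofReal (w x) ∂μ < ⊤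

/-- `w` is a doubling weight with constant `cw`:
`0 < w(B(x,2r)) ≤ cw · w(B(x,r)) < ∞` for all balls. -/
def DoublingWeight {X : Type*} [MetricSpace X] [MeasurableSpace X] (μ : Measure X)
    (w : X → ℝ) (cw : ℝ) : Prop :=
  ∀ (x : X) (r : ℝ), 0 < r →
    0 < wMeas μ w (ball x (2 * r)) ∧
      wMeas μ w (ball x (2 * r)) ≤ ENNReal.ofReal cw * wMeas μ w (ball x r) ∧
      wMeas μ w (ball x r) < ⊤

open Filter Topology in
/-- If the weighted `L^p` maximal inequality with constant `C₁` holds for all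
nonnegative `f ∈ L^∞(X)` with bounded support, then `w ∈ A_p` and `[w]_{A_p} ≤ C₁`. -/
theorem stmt_4 {X : Type*} [MetricSpace X] [MeasurableSpace X] [OpensMeasurableSpace X]
    (μ : Measure X) (c : ℝ) (hX : GoodSpace X μ c)
    (w : X → ℝ) (hw : IsWeight μ w)
    (p : ℝ) (hp : 1 < p) (C₁ : ℝ)
    (hbound : ∀ f : X → ℝ, MemLp f ⊤ μ → (∀ x, 0 ≤ f x) → BoundedSupport f →
      ∫⁻ x, Mnc μ f x ^ p * ENNReal.ofReal (w x) ∂μ ≤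
        ENNReal.ofReal C₁ * ∫⁻ x, ENNReal.ofReal (f x) ^ p * ENNReal.ofReal (w x) ∂μ) :
    MemAp μ w p ∧ ApConst μ w p ≤ C₁ := by
  classical
  obtain ⟨hw_meas, hw_pos, hw_int⟩ := hw
  obtain ⟨hX1, -, hball, -, -⟩ := hX
  have hp0 : (0:ℝ) < p := lt_trans one_pos hp
  have hp1 : (0:ℝ) < p - 1 := sub_pos.2 hp
  have hexp : 1/(1-p) < 0 := div_neg_of_pos_of_neg one_pos (by linarith)
  have hexp_ne : (1:ℝ) - p ≠ 0 := by linarith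
  set σ : X → ℝ≥0∞ := fun y => ENNReal.ofReal (w y) ^ (1/(1-p)) with hσdef
  have hσ_meas : Measurable σ :=
    (ENNReal.continuous_rpow_const.measurable).comp (ENNReal.measurable_ofReal.comp hw_meas)
  have hσ_pos : ∀ y, 0 < σ y := by
    intro y
    rcases eq_or_lt_of_le (show 0 ≤ ENNReal.ofReal (w y) from zero_le) with h | h
    · simp only [hσdef, ← h, ENNReal.zero_rpow_of_neg hexp]
      exact ENNReal.zero_lt_top
    · exact ENNReal.rpow_pos h ENNReal.ofReal_ne_top
  -- positivity of set integrals of a.e.-positive functions over balls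
  have pos_int : ∀ (h : X → ℝ≥0∞), Measurable h → (∀ᵐ y ∂μ, 0 < h y) →
      ∀ (x : X) (r : ℝ), 0 < r → 0 < ∫⁻ y in ball x r, h y ∂μ := by
    intro h hmeas hpos x r hr
    rw [pos_iff_ne_zero]
    intro h0
    have h1 : h =ᵐ[μ.restrict (ball x r)] 0 := (lintegral_eq_zero_iff hmeas).1 h0
    have h2 : ∀ᵐ y ∂μ.restrict (ball x r), 0 < h y := ae_restrict_of_ae hpos
    have h3 : ∀ᵐ (_ : X) ∂μ.restrict (ball x r), False := by
      filter_upwards [h1, h2] with y hy1 hy2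
      exact absurd hy1 (ne_of_gt hy2)
    have h4 : μ.restrict (ball x r) Set.univ = 0 := by
      simpa using h3
    rw [Measure.restrict_apply_univ] at h4
    exact absurd h4 (ne_of_gt (hball x r hr).1)
  have key : ApWith μ w p C₁ := by
    intro x r hr
    set B := ball x r with hBdef
    have hBmeas : MeasurableSet B := measurableSet_ball
    obtain ⟨hV0, hVlt⟩ := hball x r hr
    set V : ℝ≥0∞ := μ B with hVdef
    set W : ℝ≥0∞ := wMeas μ w B with hWdef
    have hWlt : W < ⊤ := (hw_int x r hr).lintegral_lt_top
    set S : ℝ≥0∞ := ∫⁻ y in B, σ y ∂μ with hSdef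
    set g : ℕ → X → ℝ≥0∞ := fun n y => min (σ y) n with hgdef
    have hg_meas : ∀ n, Measurable (g n) := fun n => hσ_meas.min measurable_const
    have hg_mono : Monotone g := fun a b hab y =>
      min_le_min le_rfl (Nat.cast_le.2 hab)
    have hg_ne_top : ∀ n y, g n y ≠ ⊤ := fun n y =>
      ne_top_of_le_ne_top (ENNReal.natCast_ne_top n) (min_le_right _ _)
    set I : ℕ → ℝ≥0∞ := fun n => ∫⁻ y in B, g n y ∂μ with hIdef
    have hI_lt : ∀ n, I n < ⊤ := by
      intro n
      calc I n ≤ ∫⁻ _ in B, (n : ℝ≥0∞) ∂μ :=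
            lintegral_mono fun y => min_le_right _ _
        _ = n * V := by rw [setLIntegral_const]
        _ < ⊤ := ENNReal.mul_lt_top (ENNReal.natCast_lt_top n) hVlt
    -- the key step for each truncation level n ≥ 1
    have step : ∀ n : ℕ, 1 ≤ n → I n ^ (p-1) * (V⁻¹ ^ p * W) ≤ ENNReal.ofReal C₁ := by
      intro n hn
      have hI_pos : 0 < I n := by
        apply pos_int _ (hg_meas n)
        · filter_upwards with y
          exact lt_min (hσ_pos y) (by exact_mod_cast Nat.pos_of_ne_zero (by omega))
        · exact hr
      set f : X → ℝ := fun y => if y ∈ B then (g n y).toReal else 0 with hfdef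
      have hf_meas : Measurable f :=
        Measurable.ite hBmeas (hg_meas n).ennreal_toReal measurable_const
      have hf_nonneg : ∀ y, 0 ≤ f y := by
        intro y; rw [hfdef]; dsimp only
        split <;> simp [ENNReal.toReal_nonneg]
      have hf_ofReal : ∀ y ∈ B, ENNReal.ofReal |f y| = g n y := by
        intro y hy
        rw [hfdef]; dsimp only
        rw [if_pos hy, abs_of_nonneg ENNReal.toReal_nonneg,
          ENNReal.ofReal_toReal (hg_ne_top n y)]
      have hf_mem : MemLp f ⊤ μ := by
        apply memLp_top_of_bound hf_meas.aestronglyMeasurable (n : ℝ)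
        filter_upwards with y
        rw [Real.norm_eq_abs, abs_of_nonneg (hf_nonneg y), hfdef]; dsimp only
        split
        · show (min (σ y) ((n:ℕ):ℝ≥0∞)).toReal ≤ (n:ℝ)
          have h := ENNReal.toReal_mono (ENNReal.natCast_ne_top n)
            (min_le_right (σ y) ((n:ℕ):ℝ≥0∞))
          simpa using h
        · positivity
      have hf_supp : BoundedSupport f := by
        refine ⟨x, r, fun y hy => ?_⟩
        by_contra hyB
        exact hy (by rw [hfdef]; dsimp only; rw [if_neg hyB])
      have H := hbound f hf_mem hf_nonneg hf_supp
      set A : ℝ≥0∞ := I n / V with hAdef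
      -- lower bound for the maximal function on B
      have hMnc : ∀ y ∈ B, A ≤ Mnc μ f y := by
        intro y hy
        have heq : (∫⁻ z in B, ENNReal.ofReal |f z| ∂μ) / μ B = A := by
          rw [hAdef, hIdef]
          congr 1
          exact setLIntegral_congr_fun hBmeas (fun z hz => hf_ofReal z hz)
        calc A = (∫⁻ z in ball x r, ENNReal.ofReal |f z| ∂μ) / μ (ball x r) := heq.symm
          _ ≤ Mnc μ f y := by
              rw [Mnc, MncE]
              exact le_iSup_of_le x (le_iSup_of_le r (le_iSup_of_le hy le_rfl))
      -- lower bound for the left-hand side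
      have hL : A ^ p * W ≤ ∫⁻ z, Mnc μ f z ^ p * ENNReal.ofReal (w z) ∂μ := by
        calc A ^ p * W = ∫⁻ y in B, A ^ p * ENNReal.ofReal (w y) ∂μ := by
              rw [hWdef, wMeas, lintegral_const_mul _ hw_meas.ennreal_ofReal]
          _ ≤ ∫⁻ y in B, Mnc μ f y ^ p * ENNReal.ofReal (w y) ∂μ := by
              apply lintegral_mono_ae
              apply ae_restrict_of_forall_mem hBmeas
              intro y hy
              exact mul_le_mul_left (ENNReal.rpow_le_rpow (hMnc y hy) hp0.le) _
          _ ≤ ∫⁻ z, Mnc μ f z ^ p * ENNReal.ofReal (w z) ∂μ :=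
              setLIntegral_le_lintegral _ _
      -- upper bound for the right-hand side
      have hR : ∫⁻ z, ENNReal.ofReal (f z) ^ p * ENNReal.ofReal (w z) ∂μ ≤ I n := by
        have heq : ∀ z, ENNReal.ofReal (f z) ^ p * ENNReal.ofReal (w z)
            = B.indicator (fun y => g n y ^ p * ENNReal.ofReal (w y)) z := by
          intro z
          by_cases hz : z ∈ B
          · rw [Set.indicator_of_mem hz, hfdef]; dsimp only
            rw [if_pos hz, ENNReal.ofReal_toReal (hg_ne_top n z)]
          · rw [Set.indicator_of_notMem hz, hfdef]; dsimp only
            rw [if_neg hz, ENNReal.ofReal_zero, ENNReal.zero_rpow_of_pos hp0, zero_mul]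
        calc ∫⁻ z, ENNReal.ofReal (f z) ^ p * ENNReal.ofReal (w z) ∂μ
            = ∫⁻ z, B.indicator (fun y => g n y ^ p * ENNReal.ofReal (w y)) z ∂μ :=
              lintegral_congr heq
          _ = ∫⁻ z in B, g n z ^ p * ENNReal.ofReal (w z) ∂μ := lintegral_indicator hBmeas _
          _ ≤ ∫⁻ z in B, g n z ∂μ := by
              apply lintegral_mono_ae
              apply ae_restrict_of_ae
              filter_upwards [hw_pos] with y hy
              set a : ℝ≥0∞ := ENNReal.ofReal (w y) with hadef
              have ha0 : a ≠ 0 := (ENNReal.ofReal_pos.2 hy).ne'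
              have hat : a ≠ ⊤ := ENNReal.ofReal_ne_top
              set m : ℝ≥0∞ := g n y with hmdef
              rcases eq_or_ne m 0 with hm0 | hm0
              · rw [hm0, ENNReal.zero_rpow_of_pos hp0, zero_mul]
              · have hmt : m ≠ ⊤ := hg_ne_top n y
                have hm_le : m ^ (p-1) ≤ a⁻¹ := by
                  have h1 : m ≤ σ y := min_le_left _ _
                  have h2 : σ y ^ (p-1) = a⁻¹ := by
                    rw [hσdef]; dsimp only
                    rw [← hadef, ← ENNReal.rpow_mul]
                    have : (1/(1-p)) * (p-1) = -1 := by field_simp; ring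
                    rw [this, ENNReal.rpow_neg_one]
                  calc m ^ (p-1) ≤ σ y ^ (p-1) := ENNReal.rpow_le_rpow h1 hp1.le
                    _ = a⁻¹ := h2
                have hmp : m ^ p = m ^ (p-1) * m := by
                  have h := ENNReal.rpow_add (x := m) (p-1) 1 hm0 hmt
                  rw [ENNReal.rpow_one] at h
                  have hpe : p - 1 + 1 = p := by ring
                  rw [hpe] at h
                  exact h
                calc m ^ p * a = m ^ (p-1) * m * a := by rw [hmp]
                  _ ≤ a⁻¹ * m * a := by
                      exact mul_le_mul_left (mul_le_mul_left hm_le m) a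
                  _ = m * (a⁻¹ * a) := by ring
                  _ = m := by rw [ENNReal.inv_mul_cancel ha0 hat, mul_one]
      have hmain : (I n / V) ^ p * W ≤ ENNReal.ofReal C₁ * I n :=
        calc (I n / V) ^ p * W = A ^ p * W := by rw [hAdef]
          _ ≤ ∫⁻ z, Mnc μ f z ^ p * ENNReal.ofReal (w z) ∂μ := hL
          _ ≤ ENNReal.ofReal C₁ * ∫⁻ z, ENNReal.ofReal (f z) ^ p * ENNReal.ofReal (w z) ∂μ := H
          _ ≤ ENNReal.ofReal C₁ * I n := mul_le_mul_right hR _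
      -- algebraic manipulation
      have hrw : (I n / V) ^ p * W = (I n ^ (p-1) * (V⁻¹ ^ p * W)) * I n := by
        rw [div_eq_mul_inv, ENNReal.mul_rpow_of_nonneg _ _ hp0.le]
        have : I n ^ p = I n ^ (p-1) * I n := by
          have h := ENNReal.rpow_add (x := I n) (p-1) 1 hI_pos.ne' (hI_lt n).ne
          rw [ENNReal.rpow_one] at h
          have hpe : p - 1 + 1 = p := by ring
          rw [hpe] at h
          exact h
        rw [this]; ring
      rw [hrw] at hmain
      exact (ENNReal.mul_le_mul_iff_left hI_pos.ne' (hI_lt n).ne).1 hmain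
    -- pass to the limit n → ∞
    have hSsup : S = ⨆ n, I n := by
      rw [hSdef, hIdef]
      rw [← lintegral_iSup (fun n => hg_meas n) hg_mono]
      apply lintegral_congr
      intro y
      show σ y = ⨆ n : ℕ, σ y ⊓ ((n:ℕ):ℝ≥0∞)
      have h1 : (⨆ n : ℕ, σ y ⊓ ((n:ℕ):ℝ≥0∞)) = σ y ⊓ ⨆ n : ℕ, ((n:ℕ):ℝ≥0∞) :=
        (inf_iSup_eq _ _).symm
      rw [h1, ENNReal.iSup_natCast]
      simp
    have hI_mono : Monotone I := fun a b hab =>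
      lintegral_mono fun y => hg_mono hab y
    have hItend : Tendsto I atTop (𝓝 S) := hSsup ▸ tendsto_atTop_iSup hI_mono
    have hKne : V⁻¹ ^ p * W ≠ ⊤ := by
      apply ENNReal.mul_ne_top
      · exact ENNReal.rpow_ne_top_of_nonneg hp0.le (ENNReal.inv_ne_top.2 hV0.ne')
      · exact hWlt.ne
    have htend : Tendsto (fun n => I n ^ (p-1) * (V⁻¹ ^ p * W)) atTop
        (𝓝 (S ^ (p-1) * (V⁻¹ ^ p * W))) := by
      apply ENNReal.Tendsto.mul_const _ (Or.inr hKne)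
      exact (ENNReal.continuous_rpow_const.tendsto S).comp hItend
    have hlim : S ^ (p-1) * (V⁻¹ ^ p * W) ≤ ENNReal.ofReal C₁ := by
      apply le_of_tendsto htend
      filter_upwards [eventually_ge_atTop 1] with n hn
      exact step n hn
    -- rewrite the goal into the limit form
    have hgoal_eq : W / V * ((∫⁻ y in B, ENNReal.ofReal (w y) ^ (1/(1-p)) ∂μ) / V) ^ (p-1)
        = S ^ (p-1) * (V⁻¹ ^ p * W) := by
      have hSint : (∫⁻ y in B, ENNReal.ofReal (w y) ^ (1/(1-p)) ∂μ) = S := rfl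
      rw [hSint, div_eq_mul_inv, div_eq_mul_inv,
        ENNReal.mul_rpow_of_nonneg _ _ hp1.le]
      have hVinv : V⁻¹ ^ p = V⁻¹ ^ (p-1) * V⁻¹ := by
        have h := ENNReal.rpow_add (x := V⁻¹) (p-1) 1
          (ENNReal.inv_ne_zero.2 hVlt.ne) (ENNReal.inv_ne_top.2 hV0.ne')
        rw [ENNReal.rpow_one] at h
        have hpe : p - 1 + 1 = p := by ring
        rw [hpe] at h
        exact h
      rw [hVinv]; ring
    calc wMeas μ w B / μ B *
          ((∫⁻ y in B, ENNReal.ofReal (w y) ^ (1/(1-p)) ∂μ) / μ B) ^ (p-1)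
        = S ^ (p-1) * (V⁻¹ ^ p * W) := hgoal_eq
      _ ≤ ENNReal.ofReal C₁ := hlim
  refine ⟨⟨C₁, key⟩, ?_⟩
  have hbdd : BddBelow {C : ℝ | ApWith μ w p C} := by
    refine ⟨0, fun C hC => ?_⟩
    obtain ⟨x0, -, -⟩ := hX1.exists_pair_ne
    have h := hC x0 1 one_pos
    set B := ball x0 1 with hBdef
    obtain ⟨hV0, hVlt⟩ := hball x0 1 one_pos
    have hW0 : 0 < wMeas μ w B := by
      apply pos_int _ (ENNReal.measurable_ofReal.comp hw_meas)
      · filter_upwards [hw_pos] with y hy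
        exact ENNReal.ofReal_pos.2 hy
      · exact one_pos
    have hS0 : 0 < ∫⁻ y in B, ENNReal.ofReal (w y) ^ (1/(1-p)) ∂μ :=
      pos_int σ hσ_meas (ae_of_all _ hσ_pos) x0 1 one_pos
    have hlhs : 0 < wMeas μ w B / μ B *
        ((∫⁻ y in B, ENNReal.ofReal (w y) ^ (1/(1-p)) ∂μ) / μ B) ^ (p-1) := by
      apply ENNReal.mul_pos
      · exact (ENNReal.div_pos hW0.ne' hVlt.ne).ne'
      · rw [Ne, ENNReal.rpow_eq_zero_iff]
        push_neg
        constructor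
        · intro hz; exact absurd hz (ENNReal.div_pos hS0.ne' hVlt.ne).ne'
        · intro _; linarith
    have : 0 < ENNReal.ofReal C := lt_of_lt_of_le hlhs h
    exact (ENNReal.ofReal_pos.1 this).le
  exact csInf_le hbdd key
end
end

section
/- Let (X,d,μ) be a metric measure space with a doubling measure (doubling constant c_μ), let 1 < p < ∞ and let w ∈ A_p with σ = w^{1/(1-p)}. Then for every f ∈ L^p(w dμ) and every x ∈ X, the pointwise estimate M*f(x) ≤ [w]_{A_p}^{1/(p-1)} · ( M^{*,w}( (M^{*,σ}(f σ^{-1}))^{p-1} w^{-1} )(x) )^{1/(p-1)} holds, where M* is the noncentered Hardy–Littlewood maximal function and M^{*,w}, M^{*,σ} are the weighted maximal functions with respect to w and σ. -/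
open MeasureTheory Metric ENNReal

noncomputable section

/-- Auxiliary: a set integral of an a.e.-positive measurable function over a set of
positive measure is positive. -/
lemma setLIntegral_pos_aux {X : Type*} [MeasurableSpace X] {μ : Measure X}
    {g : X → ℝ≥0∞} (hg : Measurable g) (hpos : ∀ᵐ y ∂μ, 0 < g y)
    {s : Set X} (hμs : 0 < μ s) : 0 < ∫⁻ y in s, g y ∂μ := by
  by_contra h
  push_neg at h
  have h0 : ∫⁻ y in s, g y ∂μ = 0 := le_antisymm h zero_le
  rw [lintegral_eq_zero_iff hg] at h0
  have : ∀ᵐ y ∂μ.restrict s, False := by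
    filter_upwards [h0, ae_restrict_of_ae hpos] with y h1 h2
    exact absurd h1 h2.ne'
  rw [ae_iff] at this
  simp only [not_false_eq_true, Set.setOf_true, Measure.restrict_apply_univ] at this
  exact hμs.ne' this

/-- Pointwise estimate: if `w ∈ A_p` and `σ = w^(1/(1-p))`, then for every
`f ∈ L^p(w dμ)` and every `x ∈ X`,
`M*f(x) ≤ [w]_{A_p}^(1/(p-1)) (M^{*,w}((M^{*,σ}(f σ⁻¹))^(p-1) w⁻¹)(x))^(1/(p-1))`. -/
theorem stmt_6 {X : Type*} [MetricSpace X] [MeasurableSpace X] [OpensMeasurableSpace X]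
    (μ : Measure X) (c : ℝ) (hX : GoodSpace X μ c)
    (w : X → ℝ) (hw : IsWeight μ w)
    (p : ℝ) (hp : 1 < p) (hAp : MemAp μ w p)
    (σ : X → ℝ) (hσ : σ = fun y => w y ^ (1 / (1 - p)))
    (f : X → ℝ) (hf : MemLpW μ w p f) (x : X) :
    Mnc μ f x ≤
      ENNReal.ofReal (ApConst μ w p) ^ (1 / (p - 1)) *
        (MncWE μ w
            (fun y =>
              MncWE μ σ (fun z => ENNReal.ofReal |f z| / ENNReal.ofReal (σ z)) y ^ (p - 1) *
                (ENNReal.ofReal (w y))⁻¹) x) ^ (1 / (p - 1)) := by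
  obtain ⟨hw_meas, hw_pos, hw_int⟩ := hw
  obtain ⟨_, _, hball, _⟩ := hX
  have h1p : (0:ℝ) < p - 1 := by linarith
  set C : ℝ := ApConst μ w p with hC
  set Mσ : X → ℝ≥0∞ := fun y =>
    MncWE μ σ (fun z => ENNReal.ofReal |f z| / ENNReal.ofReal (σ z)) y with hMσ
  set g : X → ℝ≥0∞ := fun y => Mσ y ^ (p - 1) * (ENNReal.ofReal (w y))⁻¹ with hg
  set MW : ℝ≥0∞ := MncWE μ w g x with hMWdef
  -- σ-measure equals the integral appearing in the A_p condition
  have hS_eq : ∀ (z : X) (r : ℝ), wMeas μ σ (ball z r) =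
      ∫⁻ y in ball z r, ENNReal.ofReal (w y) ^ (1 / (1 - p)) ∂μ := by
    intro z r
    refine lintegral_congr_ae ?_
    filter_upwards [ae_restrict_of_ae hw_pos] with y hy
    rw [hσ]
    exact (ENNReal.ofReal_rpow_of_pos hy).symm
  -- positivity of the A_p quantity on each ball
  set SS : Set ℝ := {C' | ApWith μ w p C'} with hSS
  have hne : SS.Nonempty := hAp
  have hW : ∀ (z : X) (r : ℝ), 0 < r →
      0 < wMeas μ w (ball z r) ∧ wMeas μ w (ball z r) < ⊤ := by
    intro z r hr
    constructor
    · exact setLIntegral_pos_aux (hw_meas.ennreal_ofReal)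
        (by filter_upwards [hw_pos] with y hy; exact ENNReal.ofReal_pos.2 hy)
        (hball z r hr).1
    · exact (hw_int z r hr).lintegral_lt_top
  have hSpos : ∀ (z : X) (r : ℝ), 0 < r → 0 < wMeas μ σ (ball z r) := by
    intro z r hr
    rw [wMeas, ← lintegral_congr_ae (show (fun y => ENNReal.ofReal (w y) ^ (1 / (1 - p)))
        =ᵐ[μ.restrict (ball z r)] fun y => ENNReal.ofReal (σ y) by
      filter_upwards [ae_restrict_of_ae hw_pos] with y hy
      rw [hσ]; exact ENNReal.ofReal_rpow_of_pos hy)]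
    refine setLIntegral_pos_aux (hw_meas.ennreal_ofReal.pow_const _) ?_ (hball z r hr).1
    filter_upwards [hw_pos] with y hy
    exact ENNReal.rpow_pos (ENNReal.ofReal_pos.2 hy) ENNReal.ofReal_ne_top
  have hQpos : ∀ (z : X) (r : ℝ), 0 < r →
      0 < (wMeas μ w (ball z r) / μ (ball z r)) *
        ((∫⁻ y in ball z r, ENNReal.ofReal (w y) ^ (1 / (1 - p)) ∂μ) / μ (ball z r)) ^ (p - 1) := by
    intro z r hr
    have h1 : 0 < wMeas μ w (ball z r) / μ (ball z r) :=
      ENNReal.div_pos (hW z r hr).1.ne' (hball z r hr).2.ne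
    have h2 : 0 < (∫⁻ y in ball z r, ENNReal.ofReal (w y) ^ (1 / (1 - p)) ∂μ) / μ (ball z r) := by
      rw [← hS_eq]
      exact ENNReal.div_pos (hSpos z r hr).ne' (hball z r hr).2.ne
    have h3 : 0 < ((∫⁻ y in ball z r, ENNReal.ofReal (w y) ^ (1 / (1 - p)) ∂μ) /
        μ (ball z r)) ^ (p - 1) := by
      rcases eq_or_ne ((∫⁻ y in ball z r, ENNReal.ofReal (w y) ^ (1 / (1 - p)) ∂μ) /
          μ (ball z r)) ⊤ with ht | ht
      · rw [ht, ENNReal.top_rpow_of_pos h1p]; exact ENNReal.zero_lt_top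
      · exact ENNReal.rpow_pos h2 ht
    exact mul_pos h1.ne' h3.ne'
  have hSS_nonneg : ∀ C' ∈ SS, 0 ≤ C' := by
    intro C' hC'
    by_contra hneg
    push_neg at hneg
    have := hC' x 1 one_pos
    rw [ENNReal.ofReal_eq_zero.2 hneg.le] at this
    exact absurd (le_antisymm this zero_le) (hQpos x 1 one_pos).ne'
  -- the A_p inequality holds with the sharp constant
  have hApC : ∀ (z : X) (r : ℝ), 0 < r →
      (wMeas μ w (ball z r) / μ (ball z r)) *
        (wMeas μ σ (ball z r) / μ (ball z r)) ^ (p - 1) ≤ ENNReal.ofReal C := by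
    intro z r hr
    refine ENNReal.le_of_forall_pos_le_add fun ε hε _ => ?_
    obtain ⟨C', hC', hlt⟩ := Real.lt_sInf_add_pos hne (show (0:ℝ) < ε from hε)
    have h0 : (0:ℝ) ≤ sInf SS := Real.sInf_nonneg hSS_nonneg
    calc (wMeas μ w (ball z r) / μ (ball z r)) *
          (wMeas μ σ (ball z r) / μ (ball z r)) ^ (p - 1)
        ≤ ENNReal.ofReal C' := by rw [hS_eq]; exact hC' z r hr
      _ ≤ ENNReal.ofReal (sInf SS + ε) := ENNReal.ofReal_le_ofReal hlt.le
      _ = ENNReal.ofReal (sInf SS) + ENNReal.ofReal ε := ENNReal.ofReal_add h0 hε.le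
      _ = ENNReal.ofReal C + ε := by rw [ENNReal.ofReal_coe_nnreal]; rfl
  -- main estimate, ball by ball
  rw [Mnc, MncE]
  refine iSup_le fun z => iSup_le fun r => iSup_le fun hxB => ?_
  have hr : 0 < r := lt_of_le_of_lt dist_nonneg (mem_ball.1 hxB)
  set B := ball z r with hB
  set Nf : ℝ≥0∞ := ∫⁻ y in B, ENNReal.ofReal |f y| ∂μ with hNf
  set W : ℝ≥0∞ := wMeas μ w B with hWdef
  set S : ℝ≥0∞ := wMeas μ σ B with hSdef
  obtain ⟨hμB0, hμBt⟩ := hball z r hr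
  obtain ⟨hW0, hWt⟩ := hW z r hr
  have hS0 : 0 < S := hSpos z r hr
  have hApB : (W / μ B) * (S / μ B) ^ (p - 1) ≤ ENNReal.ofReal C := hApC z r hr
  have hSt : S < ⊤ := by
    by_contra hSt
    push_neg at hSt
    have hS_top : S = ⊤ := top_le_iff.1 hSt
    have : (W / μ B) * (S / μ B) ^ (p - 1) = ⊤ := by
      rw [hS_top, ENNReal.top_div_of_ne_top hμBt.ne, ENNReal.top_rpow_of_pos h1p,
        ENNReal.mul_top (ENNReal.div_pos hW0.ne' hμBt.ne).ne']
    rw [this] at hApB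
    exact ENNReal.ofReal_ne_top (top_le_iff.1 hApB)
  -- Step 1: Nf ≤ S * Mσ y for y ∈ B
  have hint_eq : ∫⁻ t in B, (ENNReal.ofReal |f t| / ENNReal.ofReal (σ t)) *
      ENNReal.ofReal (σ t) ∂μ = Nf := by
    refine lintegral_congr_ae ?_
    filter_upwards [ae_restrict_of_ae hw_pos] with t ht
    have hσt : 0 < σ t := by rw [hσ]; exact Real.rpow_pos_of_pos ht _
    exact ENNReal.div_mul_cancel (ENNReal.ofReal_pos.2 hσt).ne' ENNReal.ofReal_ne_top
  have step1 : ∀ y ∈ B, Nf ≤ S * Mσ y := by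
    intro y hy
    have h1 : Nf / S ≤ Mσ y := by
      simp only [hMσ, MncWE]
      refine le_iSup_of_le z (le_iSup_of_le r (le_iSup_of_le hy ?_))
      rw [hint_eq]
    calc Nf = S * (Nf / S) := (ENNReal.mul_div_cancel hS0.ne' hSt.ne).symm
      _ ≤ S * Mσ y := mul_le_mul_right h1 S
  -- Step 2: raise to power p-1
  have step2 : ∀ y ∈ B, Nf ^ (p - 1) ≤ S ^ (p - 1) * Mσ y ^ (p - 1) := by
    intro y hy
    calc Nf ^ (p - 1) ≤ (S * Mσ y) ^ (p - 1) := ENNReal.rpow_le_rpow (step1 y hy) h1p.le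
      _ = S ^ (p - 1) * Mσ y ^ (p - 1) := ENNReal.mul_rpow_of_nonneg _ _ h1p.le
  -- Step 3: integrate over B
  have hInt1 : Nf ^ (p - 1) * μ B ≤ ∫⁻ y in B, S ^ (p - 1) * Mσ y ^ (p - 1) ∂μ := by
    rw [← setLIntegral_const]
    refine lintegral_mono_ae ?_
    filter_upwards [ae_restrict_mem measurableSet_ball] with y hy
    exact step2 y hy
  have hSp_ne_top : S ^ (p - 1) ≠ ⊤ := ENNReal.rpow_ne_top_of_nonneg h1p.le hSt.ne
  have hInt2 : ∫⁻ y in B, S ^ (p - 1) * Mσ y ^ (p - 1) ∂μ =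
      S ^ (p - 1) * ∫⁻ y in B, Mσ y ^ (p - 1) ∂μ :=
    lintegral_const_mul' _ _ hSp_ne_top
  have hInt3 : ∫⁻ y in B, Mσ y ^ (p - 1) ∂μ = ∫⁻ y in B, g y * ENNReal.ofReal (w y) ∂μ := by
    refine lintegral_congr_ae ?_
    filter_upwards [ae_restrict_of_ae hw_pos] with y hy
    rw [hg]
    simp only
    rw [mul_assoc, ENNReal.inv_mul_cancel (ENNReal.ofReal_pos.2 hy).ne' ENNReal.ofReal_ne_top,
      mul_one]
  have hMW : ∫⁻ y in B, g y * ENNReal.ofReal (w y) ∂μ ≤ MW * W := by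
    have h1 : (∫⁻ y in B, g y * ENNReal.ofReal (w y) ∂μ) / W ≤ MW := by
      simp only [hMWdef, MncWE]
      exact le_iSup_of_le z (le_iSup_of_le r (le_iSup_of_le hxB le_rfl))
    exact (ENNReal.div_le_iff_le_mul (Or.inl hW0.ne') (Or.inl hWt.ne)).1 h1
  have key : Nf ^ (p - 1) * μ B ≤ S ^ (p - 1) * (MW * W) := by
    calc Nf ^ (p - 1) * μ B ≤ ∫⁻ y in B, S ^ (p - 1) * Mσ y ^ (p - 1) ∂μ := hInt1
      _ = S ^ (p - 1) * ∫⁻ y in B, g y * ENNReal.ofReal (w y) ∂μ := by rw [hInt2, hInt3]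
      _ ≤ S ^ (p - 1) * (MW * W) := mul_le_mul_right hMW _
  -- Use the A_p condition: S^(p-1) * W ≤ C * (μ B * μ B ^ (p-1))
  have hμBp0 : μ B ^ (p - 1) ≠ 0 := (ENNReal.rpow_pos hμB0 hμBt.ne).ne'
  have hμBpt : μ B ^ (p - 1) ≠ ⊤ := ENNReal.rpow_ne_top_of_nonneg h1p.le hμBt.ne
  have hApB' : (W * S ^ (p - 1)) / (μ B * μ B ^ (p - 1)) ≤ ENNReal.ofReal C := by
    have heq : (W / μ B) * (S / μ B) ^ (p - 1) =
        (W * S ^ (p - 1)) / (μ B * μ B ^ (p - 1)) := by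
      rw [ENNReal.div_rpow_of_nonneg _ _ h1p.le, div_eq_mul_inv, div_eq_mul_inv,
        div_eq_mul_inv, ENNReal.mul_inv (Or.inl hμB0.ne') (Or.inl hμBt.ne)]
      ring
    rw [← heq]; exact hApB
  have hAp2 : W * S ^ (p - 1) ≤ ENNReal.ofReal C * (μ B * μ B ^ (p - 1)) :=
    (ENNReal.div_le_iff_le_mul (Or.inl (mul_ne_zero hμB0.ne' hμBp0))
      (Or.inl (ENNReal.mul_ne_top hμBt.ne hμBpt))).1 hApB'
  -- Combine: Nf^(p-1) ≤ C * MW * μB^(p-1)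
  have key2 : Nf ^ (p - 1) * μ B ≤ (ENNReal.ofReal C * MW * μ B ^ (p - 1)) * μ B := by
    calc Nf ^ (p - 1) * μ B ≤ S ^ (p - 1) * (MW * W) := key
      _ = MW * (W * S ^ (p - 1)) := by ring
      _ ≤ MW * (ENNReal.ofReal C * (μ B * μ B ^ (p - 1))) := mul_le_mul_right hAp2 _
      _ = (ENNReal.ofReal C * MW * μ B ^ (p - 1)) * μ B := by ring
  have key3 : Nf ^ (p - 1) ≤ ENNReal.ofReal C * MW * μ B ^ (p - 1) :=
    (ENNReal.mul_le_mul_iff_left hμB0.ne' hμBt.ne).1 key2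
  have key4 : (Nf / μ B) ^ (p - 1) ≤ ENNReal.ofReal C * MW := by
    rw [ENNReal.div_rpow_of_nonneg _ _ h1p.le]
    exact (ENNReal.div_le_iff hμBp0 hμBpt).2 key3
  -- take (p-1)-th roots
  have hinv : (p - 1) * (1 / (p - 1)) = 1 := by field_simp
  calc Nf / μ B = ((Nf / μ B) ^ (p - 1)) ^ (1 / (p - 1)) := by
        rw [← ENNReal.rpow_mul, hinv, ENNReal.rpow_one]
    _ ≤ (ENNReal.ofReal C * MW) ^ (1 / (p - 1)) :=
        ENNReal.rpow_le_rpow key4 (by positivity)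
    _ = ENNReal.ofReal C ^ (1 / (p - 1)) * MW ^ (1 / (p - 1)) :=
        ENNReal.mul_rpow_of_nonneg _ _ (by positivity)
end
end

section
/- Let (X,d,μ) be a metric measure space with a doubling measure (doubling constant c_μ), let f ∈ L^∞(X) be nonnegative with bounded support, let t > 0 be such that E_t = {x ∈ X : M*f(x) > t} ≠ X, and let f_t be the Calderón–Zygmund-type replacement of f at level t built from a Whitney cover of E_t. Then M*f(x) ≤ C(c_μ)·M*f_t(x) for every x ∈ X \ E_t, where C(c_μ) depends only on the doubling constant and M* is the noncentered Hardy–Littlewood maximal function. -/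
open MeasureTheory Metric ENNReal

noncomputable section

/-- With `E_t = {M*f > t} ≠ X` and `f_t` the Calderón–Zygmund-type
replacement of `f` at level `t` built from a Whitney cover of `E_t` (with overlap constant
`N`), one has `M*f(x) ≤ C M*f_t(x)` for every `x ∈ X \ E_t`, where `C` depends only on the
doubling constant `c_μ` (and the Whitney overlap constant `N = N(c_μ)`). -/
theorem stmt_10 (c : ℝ) (hc : 1 < c) (N : ℕ) :
    ∃ C : ℝ, 0 < C ∧
      ∀ (X : Type*) [MetricSpace X] [MeasurableSpace X] [OpensMeasurableSpace X]
        (μ : Measure X), GoodSpace X μ c →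
        ∀ f : X → ℝ, MemLp f ⊤ μ → (∀ x, 0 ≤ f x) → BoundedSupport f →
        ∀ t : ℝ, 0 < t →
        ∀ E : Set X, E = {x | ENNReal.ofReal t < Mnc μ f x} → E ≠ Set.univ →
        ∀ (xc : ℕ → X) (rad : ℕ → ℝ),
          (∀ i, rad i = infDist (xc i) Eᶜ / 8) →
          (∀ i, ball (xc i) (rad i) ⊆ E) →
          E = (⋃ i, ball (xc i) (rad i)) →
          (∀ x, (∑' i, (ball (xc i) (rad i)).indicator (fun _ => (1 : ℝ≥0∞)) x) ≤ N) →
        ∀ ft : X → ℝ,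
          (∀ x ∉ E, ft x = f x) →
          (∀ x ∈ E, ft x = sSup {a : ℝ | ∃ i, x ∈ ball (xc i) (rad i) ∧
              a = ⨍ y in ball (xc i) (rad i), f y ∂μ}) →
        ∀ x ∉ E, Mnc μ f x ≤ ENNReal.ofReal C * Mnc μ ft x := by
  refine ⟨((N : ℝ) + 1) * c, by positivity, ?_⟩
  intro X _ _ _ μ hGS f hf hf0 _ t ht E hEdef hEne xc rad hrad hsub hcover hN ft hftout hftin x hx
  obtain ⟨_, _, hballs, hc1, hdbl⟩ := hGS
  have hEmeas : MeasurableSet E := by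
    rw [hcover]; exact MeasurableSet.iUnion fun i => measurableSet_ball
  -- essential sup bound
  set M : ℝ := (eLpNorm f ⊤ μ).toReal with hM
  have hflt : eLpNorm f ⊤ μ < ⊤ := hf.2
  have hfleM : ∀ᵐ y ∂μ, f y ≤ M := by
    filter_upwards [ae_le_eLpNormEssSup (f := f) (μ := μ)] with y hy
    have h1 : (‖f y‖₊ : ℝ≥0∞) ≤ eLpNorm f ⊤ μ := by rwa [eLpNorm_exponent_top]
    calc f y ≤ ‖f y‖ := le_abs_self _
      _ = ((‖f y‖₊ : ℝ≥0∞)).toReal := by simp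
      _ ≤ M := ENNReal.toReal_mono hflt.ne h1
  -- integrability on finite-measure sets
  have hint : ∀ s : Set X, μ s < ⊤ → IntegrableOn f s μ := by
    intro s hs
    haveI : IsFiniteMeasure (μ.restrict s) :=
      ⟨by rwa [Measure.restrict_apply_univ]⟩
    exact memLp_one_iff_integrable.mp ((hf.restrict s).mono_exponent le_top)
  -- bound on averages
  have havg_le : ∀ j : ℕ, 0 < rad j → ⨍ y in ball (xc j) (rad j), f y ∂μ ≤ M := by
    intro j hj
    obtain ⟨hμpos, hμlt⟩ := hballs (xc j) (rad j) hj
    have hIf : IntegrableOn f (ball (xc j) (rad j)) μ := hint _ hμlt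
    have hIc : IntegrableOn (fun _ => M) (ball (xc j) (rad j)) μ :=
      integrableOn_const hμlt.ne
    have h1 : ∫ y in ball (xc j) (rad j), f y ∂μ ≤ M * (μ (ball (xc j) (rad j))).toReal := by
      calc ∫ y in ball (xc j) (rad j), f y ∂μ
          ≤ ∫ _ in ball (xc j) (rad j), M ∂μ :=
            integral_mono_ae hIf hIc (ae_restrict_of_ae hfleM)
        _ = (μ (ball (xc j) (rad j))).toReal • M := setIntegral_const M
        _ = M * (μ (ball (xc j) (rad j))).toReal := by rw [smul_eq_mul, mul_comm]
    have hpos : 0 < (μ (ball (xc j) (rad j))).toReal := ENNReal.toReal_pos hμpos.ne' hμlt.ne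
    rw [setAverage_eq, smul_eq_mul]
    rw [measureReal_def, inv_mul_le_iff₀ hpos]
    linarith
  -- ft dominates the averages on each Whitney ball
  have hft_ge : ∀ i : ℕ, ∀ y ∈ ball (xc i) (rad i),
      ⨍ w in ball (xc i) (rad i), f w ∂μ ≤ ft y := by
    intro i y hy
    rw [hftin y (hsub i hy)]
    refine le_csSup ⟨M, ?_⟩ ⟨i, hy, rfl⟩
    rintro b ⟨j, hyj, rfl⟩
    exact havg_le j (pos_of_mem_ball hyj)
  -- per-ball comparison of lintegrals
  have hball_le : ∀ i : ℕ, (ball (xc i) (rad i)).Nonempty →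
      ∫⁻ y in ball (xc i) (rad i), ENNReal.ofReal |f y| ∂μ ≤
        ∫⁻ y in ball (xc i) (rad i), ENNReal.ofReal |ft y| ∂μ := by
    rintro i ⟨y₀, hy₀⟩
    have hi : 0 < rad i := pos_of_mem_ball hy₀
    obtain ⟨hμpos, hμlt⟩ := hballs (xc i) (rad i) hi
    set Bi := ball (xc i) (rad i) with hBi
    set a := ⨍ w in Bi, f w ∂μ with ha
    have hIf : IntegrableOn f Bi μ := hint _ hμlt
    have h1 : ∫⁻ y in Bi, ENNReal.ofReal |f y| ∂μ = ENNReal.ofReal (∫ y in Bi, f y ∂μ) := by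
      have habs : ∀ y, ENNReal.ofReal |f y| = ENNReal.ofReal (f y) := fun y => by
        rw [abs_of_nonneg (hf0 y)]
      simp_rw [habs]
      exact (ofReal_integral_eq_lintegral_ofReal hIf
        (Filter.Eventually.of_forall fun y => hf0 y)).symm
    have htR : (μ Bi).toReal ≠ 0 := (ENNReal.toReal_pos hμpos.ne' hμlt.ne).ne'
    have h2 : ∫ y in Bi, f y ∂μ = (μ Bi).toReal * a := by
      rw [ha, setAverage_eq, smul_eq_mul, measureReal_def, ← mul_assoc, mul_inv_cancel₀ htR, one_mul]
    have h3 : ∫⁻ y in Bi, ENNReal.ofReal a ∂μ ≤ ∫⁻ y in Bi, ENNReal.ofReal |ft y| ∂μ := by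
      refine lintegral_mono_ae ?_
      filter_upwards [ae_restrict_mem measurableSet_ball] with y hy
      exact ENNReal.ofReal_le_ofReal ((hft_ge i y hy).trans (le_abs_self _))
    calc ∫⁻ y in Bi, ENNReal.ofReal |f y| ∂μ
        = ENNReal.ofReal ((μ Bi).toReal * a) := by rw [h1, h2]
      _ = μ Bi * ENNReal.ofReal a := by
          rw [ENNReal.ofReal_mul ENNReal.toReal_nonneg, ENNReal.ofReal_toReal hμlt.ne]
      _ = ∫⁻ _ in Bi, ENNReal.ofReal a ∂μ := by rw [setLIntegral_const, mul_comm]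
      _ ≤ ∫⁻ y in Bi, ENNReal.ofReal |ft y| ∂μ := h3
  -- now the main estimate
  rw [Mnc, MncE]
  refine iSup_le fun z => iSup_le fun r => iSup_le fun hxB => ?_
  have hr : 0 < r := pos_of_mem_ball hxB
  set g : X → ℝ≥0∞ := fun y => ENNReal.ofReal |ft y| with hg
  -- geometry: Whitney balls meeting B are inside 2B
  have hsubset2 : ∀ i : ℕ, (ball (xc i) (rad i) ∩ ball z r).Nonempty →
      ball (xc i) (rad i) ⊆ ball z (2 * r) := by
    rintro i ⟨y, hyBi, hyB⟩ w hw
    rw [mem_ball] at hyBi hyB hw hxB ⊢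
    have h8 : 8 * rad i ≤ dist (xc i) x := by
      have h1 : infDist (xc i) Eᶜ ≤ dist (xc i) x := infDist_le_dist_of_mem hx
      rw [hrad i] at *
      linarith
    have hdxy : dist (xc i) x ≤ dist (xc i) y + dist y z + dist z x := dist_triangle4 _ _ _ _
    rw [dist_comm (xc i) y, dist_comm z x] at hdxy
    have hri : rad i < 2 * r / 7 := by nlinarith [hyBi, hyB, hxB]
    have : dist w z ≤ dist w (xc i) + dist (xc i) y + dist y z := dist_triangle4 _ _ _ _
    rw [dist_comm (xc i) y] at this
    nlinarith [hw, hyBi, hyB]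
  -- Part 1: the piece outside E
  have hpart1 : ∫⁻ y in ball z r \ E, ENNReal.ofReal |f y| ∂μ ≤
      ∫⁻ y in ball z (2 * r), g y ∂μ := by
    have heq : ∫⁻ y in ball z r \ E, ENNReal.ofReal |f y| ∂μ
        = ∫⁻ y in ball z r \ E, g y ∂μ := by
      refine setLIntegral_congr_fun (measurableSet_ball.diff hEmeas) ?_
      refine fun y hy => ?_
      show ENNReal.ofReal |f y| = ENNReal.ofReal |ft y|
      rw [hftout y hy.2]
    rw [heq]
    exact lintegral_mono_set fun y hy => mem_ball.mpr (by
      have := mem_ball.mp hy.1; linarith)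
  -- Part 2: the piece inside E
  set I : Set ℕ := {i | (ball (xc i) (rad i) ∩ ball z r).Nonempty} with hI
  have hmeasle : Measure.sum (fun i : I => μ.restrict (ball (xc i.1) (rad i.1))) ≤
      (N : ℝ≥0∞) • μ.restrict (ball z (2 * r)) := by
    refine Measure.le_iff.mpr fun s hs => ?_
    rw [Measure.sum_apply _ hs, Measure.smul_apply, Measure.restrict_apply hs, smul_eq_mul]
    have hterm : ∀ i : I, (μ.restrict (ball (xc i.1) (rad i.1))) s
        = ∫⁻ y, (s ∩ ball (xc i.1) (rad i.1)).indicator (fun _ => (1 : ℝ≥0∞)) y ∂μ := by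
      intro i
      rw [Measure.restrict_apply hs]
      exact (lintegral_indicator_one (hs.inter measurableSet_ball)).symm
    calc ∑' i : I, (μ.restrict (ball (xc i.1) (rad i.1))) s
        = ∑' i : I, ∫⁻ y, (s ∩ ball (xc i.1) (rad i.1)).indicator
            (fun _ => (1 : ℝ≥0∞)) y ∂μ := by exact tsum_congr hterm
      _ = ∫⁻ y, ∑' i : I, (s ∩ ball (xc i.1) (rad i.1)).indicator
            (fun _ => (1 : ℝ≥0∞)) y ∂μ :=
          (lintegral_tsum fun i => (measurable_const.indicator
            (hs.inter measurableSet_ball)).aemeasurable).symm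
      _ ≤ ∫⁻ y, (N : ℝ≥0∞) * (s ∩ ball z (2 * r)).indicator (fun _ => (1 : ℝ≥0∞)) y ∂μ := by
          refine lintegral_mono fun y => ?_
          by_cases hy2 : y ∈ s ∩ ball z (2 * r)
          · rw [Set.indicator_of_mem hy2, mul_one]
            calc ∑' i : I, (s ∩ ball (xc i.1) (rad i.1)).indicator
                  (fun _ => (1 : ℝ≥0∞)) y
                ≤ ∑' i : I, (ball (xc i.1) (rad i.1)).indicator (fun _ => (1 : ℝ≥0∞)) y := by
                  refine ENNReal.tsum_le_tsum fun i => ?_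
                  exact Set.indicator_le_indicator_of_subset Set.inter_subset_right
                    (fun _ => zero_le_one) y
              _ = ∑' i : ℕ, I.indicator
                  (fun i => (ball (xc i) (rad i)).indicator (fun _ => (1 : ℝ≥0∞)) y) i :=
                  tsum_subtype I
                    (fun i => (ball (xc i) (rad i)).indicator (fun _ => (1 : ℝ≥0∞)) y)
              _ ≤ ∑' i : ℕ, (ball (xc i) (rad i)).indicator (fun _ => (1 : ℝ≥0∞)) y :=
                  ENNReal.tsum_le_tsum fun i => Set.indicator_le_self _ _ i
              _ ≤ (N : ℝ≥0∞) := hN y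
          · rw [Set.indicator_of_notMem hy2, mul_zero]
            have hzero : ∀ i : I, (s ∩ ball (xc i.1) (rad i.1)).indicator
                (fun _ => (1 : ℝ≥0∞)) y = 0 := by
              intro i
              refine Set.indicator_of_notMem (fun hmem => hy2 ⟨hmem.1, ?_⟩) _
              exact hsubset2 i.1 i.2 hmem.2
            simp only [hzero, tsum_zero, le_refl]
      _ = (N : ℝ≥0∞) * μ (s ∩ ball z (2 * r)) := by
          rw [lintegral_const_mul' _ _ (by simp : (N : ℝ≥0∞) ≠ ⊤)]
          exact congrArg (fun u => (N : ℝ≥0∞) * u)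
            (lintegral_indicator_one (hs.inter measurableSet_ball))
  have hpart2 : ∫⁻ y in ball z r ∩ E, ENNReal.ofReal |f y| ∂μ ≤
      (N : ℝ≥0∞) * ∫⁻ y in ball z (2 * r), g y ∂μ := by
    have hcov2 : ball z r ∩ E ⊆ ⋃ i : I, ball (xc i.1) (rad i.1) := by
      rintro y ⟨hyB, hyE⟩
      rw [hcover] at hyE
      obtain ⟨i, hi⟩ := Set.mem_iUnion.mp hyE
      exact Set.mem_iUnion.mpr ⟨⟨i, ⟨y, hi, hyB⟩⟩, hi⟩
    calc ∫⁻ y in ball z r ∩ E, ENNReal.ofReal |f y| ∂μ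
        ≤ ∫⁻ y in ⋃ i : I, ball (xc i.1) (rad i.1), ENNReal.ofReal |f y| ∂μ :=
          lintegral_mono_set hcov2
      _ ≤ ∑' i : I, ∫⁻ y in ball (xc i.1) (rad i.1), ENNReal.ofReal |f y| ∂μ :=
          lintegral_iUnion_le _ _
      _ ≤ ∑' i : I, ∫⁻ y in ball (xc i.1) (rad i.1), g y ∂μ := by
          refine ENNReal.tsum_le_tsum fun i => ?_
          obtain ⟨y, hyBi, _⟩ := i.2
          exact hball_le i.1 ⟨y, hyBi⟩
      _ = ∫⁻ y, g y ∂(Measure.sum fun i : I => μ.restrict (ball (xc i.1) (rad i.1))) :=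
          (lintegral_sum_measure g _).symm
      _ ≤ ∫⁻ y, g y ∂((N : ℝ≥0∞) • μ.restrict (ball z (2 * r))) :=
          lintegral_mono' hmeasle le_rfl
      _ = (N : ℝ≥0∞) * ∫⁻ y in ball z (2 * r), g y ∂μ := lintegral_smul_measure _ _
  -- combine
  have hkey : ∫⁻ y in ball z r, ENNReal.ofReal |f y| ∂μ ≤
      ((N : ℝ≥0∞) + 1) * ∫⁻ y in ball z (2 * r), g y ∂μ := by
    calc ∫⁻ y in ball z r, ENNReal.ofReal |f y| ∂μ
        = (∫⁻ y in ball z r ∩ E, ENNReal.ofReal |f y| ∂μ)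
          + ∫⁻ y in ball z r \ E, ENNReal.ofReal |f y| ∂μ :=
          (lintegral_inter_add_diff _ _ hEmeas).symm
      _ ≤ (N : ℝ≥0∞) * (∫⁻ y in ball z (2 * r), g y ∂μ)
          + ∫⁻ y in ball z (2 * r), g y ∂μ := add_le_add hpart2 hpart1
      _ = ((N : ℝ≥0∞) + 1) * ∫⁻ y in ball z (2 * r), g y ∂μ := by ring
  -- divide and compare with the maximal function at x
  obtain ⟨hμBpos, hμBlt⟩ := hballs z r hr
  have hx2 : x ∈ ball z (2 * r) := mem_ball.mpr (by have := mem_ball.mp hxB; linarith)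
  set S : ℝ≥0∞ := ∫⁻ y in ball z (2 * r), g y ∂μ with hS
  have hS2 : S / μ (ball z (2 * r)) ≤ Mnc μ ft x := by
    rw [Mnc, MncE]
    exact le_iSup_of_le z (le_iSup_of_le (2 * r) (le_iSup_of_le hx2 le_rfl))
  have hcne : ENNReal.ofReal c ≠ 0 := by
    simp [ENNReal.ofReal_eq_zero]; linarith
  have hSstep : S / μ (ball z r) ≤ ENNReal.ofReal c * (S / μ (ball z (2 * r))) := by
    calc S / μ (ball z r)
        = ENNReal.ofReal c * S / (ENNReal.ofReal c * μ (ball z r)) :=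
          (ENNReal.mul_div_mul_left _ _ hcne ENNReal.ofReal_ne_top).symm
      _ ≤ ENNReal.ofReal c * S / μ (ball z (2 * r)) :=
          ENNReal.div_le_div_left (hdbl z r hr) _
      _ = ENNReal.ofReal c * (S / μ (ball z (2 * r))) := by rw [mul_div_assoc]
  calc (∫⁻ y in ball z r, ENNReal.ofReal |f y| ∂μ) / μ (ball z r)
      ≤ (((N : ℝ≥0∞) + 1) * S) / μ (ball z r) := ENNReal.div_le_div_right hkey _
    _ = ((N : ℝ≥0∞) + 1) * (S / μ (ball z r)) := by rw [mul_div_assoc]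
    _ ≤ ((N : ℝ≥0∞) + 1) * (ENNReal.ofReal c * (S / μ (ball z (2 * r)))) := by
        exact mul_le_mul_right hSstep _
    _ ≤ ((N : ℝ≥0∞) + 1) * (ENNReal.ofReal c * Mnc μ ft x) := by
        exact mul_le_mul_right (mul_le_mul_right hS2 _) _
    _ = ENNReal.ofReal (((N : ℝ) + 1) * c) * Mnc μ ft x := by
        rw [ENNReal.ofReal_mul (by positivity), ← mul_assoc]
        congr 2
        rw [ENNReal.ofReal_add (by positivity) zero_le_one]
        simp [ENNReal.ofReal_natCast]
end
end
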